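/- For every d ≥ 1, k with 0 ≤ k ≤ d−1, and j with 0 ≤ j ≤ d, we have c_{d,k}(j) ≤ c_{d,k+1}(j). -/
import Mathlib


/-- The integer polynomial `d!·P_{d,k}` in the variable `n`, whose coefficients are the
numbers `c_{d,k}(j)`. -/
noncomputable def Qpoly (d k : ℕ) : Polynomial ℤ :=
  ∑ i ∈ Finset.range (k + 1), Polynomial.C (k.choose i : ℤ) *
    ∏ m ∈ Finset.range d, (Polynomial.X + Polynomial.C ((m : ℤ) + 1 - (i : ℤ)))

open Polynomial Finset

/-- Auxiliary product `∏_{m<d} (X + (m + c))`. -/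
noncomputable def Fprod (d : ℕ) (c : ℤ) : Polynomial ℤ :=
  ∏ m ∈ Finset.range d, (Polynomial.X + Polynomial.C ((m : ℤ) + c))

/-- Auxiliary sum `∑_i C(k,i) Fprod d (c - i)`. -/
noncomputable def Spoly (d k : ℕ) (c : ℤ) : Polynomial ℤ :=
  ∑ i ∈ Finset.range (k + 1), Polynomial.C (k.choose i : ℤ) * Fprod d (c - (i : ℤ))

lemma Fprod_succ (d : ℕ) (c : ℤ) :
    Fprod (d + 1) c = Fprod d c * (X + C ((d : ℤ) + c)) :=
  Finset.prod_range_succ _ _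

lemma Fprod_succ' (d : ℕ) (c : ℤ) :
    Fprod (d + 1) c = Fprod d (c + 1) * (X + C c) := by
  unfold Fprod
  rw [Finset.prod_range_succ']
  congr 1
  · refine Finset.prod_congr rfl fun m _ => ?_
    congr 1
    push_cast
    ring
  · norm_num

lemma Qpoly_eq (d k : ℕ) : Qpoly d k = Spoly d k 1 := by
  unfold Qpoly Spoly Fprod
  refine Finset.sum_congr rfl fun i _ => ?_
  congr 1
  refine Finset.prod_congr rfl fun m _ => ?_
  congr 1
  ring

/-- Pascal-type recursion in `k`. -/
lemma spoly_pascal (d k : ℕ) (c : ℤ) :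
    Spoly d (k + 1) c = Spoly d k c + Spoly d k (c - 1) := by
  unfold Spoly
  rw [Finset.sum_range_succ' (fun i => C (((k + 1).choose i : ℕ) : ℤ) * Fprod d (c - (i : ℤ)))]
  have h1 : ∀ i ∈ Finset.range (k + 1),
      C (((k + 1).choose (i + 1) : ℕ) : ℤ) * Fprod d (c - ((i + 1 : ℕ) : ℤ)) =
        C ((k.choose i : ℕ) : ℤ) * Fprod d (c - 1 - (i : ℤ)) +
          C ((k.choose (i + 1) : ℕ) : ℤ) * Fprod d (c - ((i + 1 : ℕ) : ℤ)) := by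
    intro i _
    rw [Nat.choose_succ_succ]
    push_cast
    rw [C_add, add_mul]
    congr 2
    push_cast
    ring_nf
  rw [Finset.sum_congr rfl h1, Finset.sum_add_distrib]
  have h2 : ∑ i ∈ Finset.range (k + 1),
      C ((k.choose (i + 1) : ℕ) : ℤ) * Fprod d (c - ((i + 1 : ℕ) : ℤ)) +
        C (((k + 1).choose 0 : ℕ) : ℤ) * Fprod d (c - ((0 : ℕ) : ℤ)) =
      ∑ i ∈ Finset.range (k + 1), C ((k.choose i : ℕ) : ℤ) * Fprod d (c - (i : ℤ)) := by
    rw [show ((k + 1).choose 0 : ℕ) = k.choose 0 by simp]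
    rw [← Finset.sum_range_succ' (fun i => C ((k.choose i : ℕ) : ℤ) * Fprod d (c - (i : ℤ)))]
    rw [Finset.sum_range_succ]
    simp [Nat.choose_succ_self]
  rw [add_assoc, h2]
  ring

/-- The binomial identity `(n - i)·C(n,i) = n·C(n-1,i)` in `ℕ`. -/
lemma choose_aux (n i : ℕ) : (n - i) * n.choose i = n * (n - 1).choose i := by
  cases n with
  | zero => simp
  | succ m =>
    rcases le_or_gt i (m + 1) with h | h
    · have := Nat.choose_mul_succ_eq m i
      simpa [mul_comm] using this.symm
    · rw [Nat.choose_eq_zero_of_lt h, Nat.choose_eq_zero_of_lt (by omega)]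
      simp

/-- Cast version in `ℤ[X]` for `i ≤ n`. -/
lemma choose_cast (n i : ℕ) (h : i ≤ n) :
    ((n : Polynomial ℤ) - (i : Polynomial ℤ)) * ((n.choose i : ℕ) : Polynomial ℤ) =
      (n : Polynomial ℤ) * (((n - 1).choose i : ℕ) : Polynomial ℤ) := by
  have h1 := congrArg (fun t : ℕ => (t : Polynomial ℤ)) (choose_aux n i)
  push_cast at h1
  rw [Nat.cast_sub h] at h1
  push_cast at h1
  exact h1

/-- Main recursion: `T_{d+1,k+1} = (X + (d-k-1))·T_{d,k+1} + (k+1)·T_{d,k}`. -/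
lemma spoly_rec (d k : ℕ) :
    Spoly (d + 1) (k + 1) 0 =
      (X + C ((d : ℤ) - ((k : ℤ) + 1))) * Spoly d (k + 1) 0 +
        C ((k : ℤ) + 1) * Spoly d k 0 := by
  unfold Spoly
  have hext : ∑ i ∈ Finset.range (k + 1), C ((k.choose i : ℕ) : ℤ) * Fprod d (0 - (i : ℤ)) =
      ∑ i ∈ Finset.range (k + 2), C ((k.choose i : ℕ) : ℤ) * Fprod d (0 - (i : ℤ)) := by
    rw [Finset.sum_range_succ (fun i => C ((k.choose i : ℕ) : ℤ) * Fprod d (0 - (i : ℤ))) (k + 1),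
      Nat.choose_succ_self]
    simp
  rw [hext, Finset.mul_sum, Finset.mul_sum, ← Finset.sum_add_distrib]
  refine Finset.sum_congr rfl fun i hi => ?_
  have hik : i ≤ k + 1 := by
    simp only [Finset.mem_range] at hi; omega
  have hch := choose_cast (k + 1) i hik
  simp only [Nat.add_sub_cancel] at hch
  push_cast at hch
  rw [Fprod_succ]
  simp only [map_sub, map_add, map_natCast, map_one, zero_sub, map_neg]
  linear_combination (Fprod d (-(i : ℤ))) * hch

/-- The shift identity: `X·T'_{m+2,m+1} = (X - (m+2))·T_{m+2,m+1} + (m+2)(m+1)·T_{m+1,m}`. -/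
lemma spoly_shift (m : ℕ) :
    X * Spoly (m + 2) (m + 1) (-1) =
      (X - C ((m : ℤ) + 2)) * Spoly (m + 2) (m + 1) 0 +
        C (((m : ℤ) + 2) * ((m : ℤ) + 1)) * Spoly (m + 1) m 0 := by
  unfold Spoly
  have hext : ∑ i ∈ Finset.range (m + 1), C ((m.choose i : ℕ) : ℤ) * Fprod (m + 1) (0 - (i : ℤ)) =
      ∑ i ∈ Finset.range (m + 2), C ((m.choose i : ℕ) : ℤ) * Fprod (m + 1) (0 - (i : ℤ)) := by
    rw [Finset.sum_range_succ (fun i => C ((m.choose i : ℕ) : ℤ) * Fprod (m + 1) (0 - (i : ℤ))) (m + 1),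
      Nat.choose_succ_self]
    simp
  rw [hext, Finset.mul_sum, Finset.mul_sum, Finset.mul_sum, ← Finset.sum_add_distrib]
  refine Finset.sum_congr rfl fun i hi => ?_
  have hik : i ≤ m + 1 := by
    simp only [Finset.mem_range] at hi; omega
  have hch := choose_cast (m + 1) i hik
  simp only [Nat.add_sub_cancel] at hch
  push_cast at hch
  have hf1 : Fprod (m + 2) (-1 - (i : ℤ)) = Fprod (m + 1) (0 - (i : ℤ)) * (X + C (-1 - (i : ℤ))) := by
    rw [Fprod_succ' (m + 1) (-1 - (i : ℤ))]
    congr 2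
    ring
  have hf2 : Fprod (m + 2) (0 - (i : ℤ)) =
      Fprod (m + 1) (0 - (i : ℤ)) * (X + C (((m + 1 : ℕ) : ℤ) + (0 - (i : ℤ)))) :=
    Fprod_succ (m + 1) (0 - (i : ℤ))
  rw [hf1, hf2]
  simp only [map_sub, map_add, map_mul, map_natCast, map_one, map_neg, map_ofNat, zero_sub,
    Polynomial.C_0, map_zero]
  push_cast
  linear_combination (((m : Polynomial ℤ) + 2) * Fprod (m + 1) (-(i : ℤ))) * hch

/-- Boundary recursion: `T_{m+3,m+2} = 2X·T_{m+2,m+1} + (m+2)(m+1)·T_{m+1,m}`. -/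
lemma spoly_boundary (m : ℕ) :
    Spoly (m + 3) (m + 2) 0 =
      C 2 * (X * Spoly (m + 2) (m + 1) 0) +
        C (((m : ℤ) + 2) * ((m : ℤ) + 1)) * Spoly (m + 1) m 0 := by
  have h1 := spoly_rec (m + 2) (m + 1)
  have h2 := spoly_pascal (m + 2) (m + 1) 0
  have h3 := spoly_shift m
  rw [show ((0 : ℤ) - 1) = -1 by norm_num] at h2
  rw [h1, h2]
  push_cast at *
  simp only [map_sub, map_add, map_mul, map_natCast, map_one, map_ofNat] at *
  linear_combination (X + ((m : Polynomial ℤ) + 2) - ((m : Polynomial ℤ) + 1 + 1)) *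
      (Spoly (m + 2) (m + 1) 0 + Spoly (m + 2) (m + 1) (-1)) + h3

/-- Coefficientwise nonnegativity. -/
def CoeffNN (p : Polynomial ℤ) : Prop := ∀ j, 0 ≤ p.coeff j

lemma coeffNN_add {p q : Polynomial ℤ} (hp : CoeffNN p) (hq : CoeffNN q) : CoeffNN (p + q) := by
  intro j
  rw [coeff_add]
  exact add_nonneg (hp j) (hq j)

lemma coeffNN_mul {p q : Polynomial ℤ} (hp : CoeffNN p) (hq : CoeffNN q) : CoeffNN (p * q) := by
  intro j
  rw [coeff_mul]
  exact Finset.sum_nonneg fun x _ => mul_nonneg (hp _) (hq _)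

lemma coeffNN_C {a : ℤ} (ha : 0 ≤ a) : CoeffNN (C a) := by
  intro j
  rw [coeff_C]
  split <;> simp [ha]

lemma coeffNN_X : CoeffNN (X : Polynomial ℤ) := by
  intro j
  rw [coeff_X]
  split <;> norm_num

lemma coeffNN_X_add_C {a : ℤ} (ha : 0 ≤ a) : CoeffNN (X + C a) :=
  coeffNN_add coeffNN_X (coeffNN_C ha)

lemma coeffNN_one : CoeffNN (1 : Polynomial ℤ) := by
  intro j
  rw [coeff_one]
  split <;> norm_num

lemma coeffNN_Fprod (d : ℕ) (c : ℤ) (hc : 0 ≤ c) : CoeffNN (Fprod d c) := by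
  induction d with
  | zero => simpa [Fprod] using coeffNN_one
  | succ n ih =>
    rw [Fprod_succ]
    exact coeffNN_mul ih (coeffNN_X_add_C (by positivity))

lemma spoly_zero (d : ℕ) : Spoly d 0 0 = Fprod d 0 := by
  simp [Spoly]

lemma spoly_two_one : Spoly 2 1 0 = C 2 * (X * X) := by
  unfold Spoly Fprod
  simp [Finset.sum_range_succ, Finset.prod_range_succ]
  ring

/-- Key positivity: all coefficients of `T_{d,k}` are nonnegative when `k + 1 ≤ d`. -/
lemma spoly_pos (d : ℕ) : ∀ k, k + 1 ≤ d → CoeffNN (Spoly d k 0) := by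
  induction d using Nat.strong_induction_on with
  | _ d IH =>
    intro k hk
    match k with
    | 0 =>
      rw [spoly_zero]
      exact coeffNN_Fprod d 0 le_rfl
    | (k0 + 1) =>
      obtain ⟨d0, rfl⟩ : ∃ d0, d = d0 + 1 := ⟨d - 1, by omega⟩
      by_cases hc : k0 + 2 ≤ d0
      · rw [spoly_rec]
        refine coeffNN_add (coeffNN_mul (coeffNN_X_add_C ?_) (IH d0 (by omega) (k0 + 1) hc))
          (coeffNN_mul (coeffNN_C (by positivity)) (IH d0 (by omega) k0 (by omega)))
        have : (k0 : ℤ) + 2 ≤ (d0 : ℤ) := by exact_mod_cast hc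
        linarith
      · have hd0 : d0 = k0 + 1 := by omega
        subst hd0
        match k0 with
        | 0 =>
          rw [spoly_two_one]
          exact coeffNN_mul (coeffNN_C (by norm_num)) (coeffNN_mul coeffNN_X coeffNN_X)
        | (m + 1) =>
          rw [show m + 1 + 1 + 1 = m + 3 by omega, show m + 1 + 1 = m + 2 by omega]
          rw [spoly_boundary]
          refine coeffNN_add (coeffNN_mul (coeffNN_C (by norm_num))
            (coeffNN_mul coeffNN_X (IH (m + 2) (by omega) (m + 1) (by omega))))
            (coeffNN_mul (coeffNN_C (by positivity)) (IH (m + 1) (by omega) m (by omega)))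

/-- For every `d ≥ 1`, `0 ≤ k ≤ d−1`, `0 ≤ j ≤ d`,
`c_{d,k}(j) ≤ c_{d,k+1}(j)`. -/
theorem stmt13 (d k j : ℕ) (hd : 1 ≤ d) (hk : k + 1 ≤ d) (hj : j ≤ d) :
    (Qpoly d k).coeff j ≤ (Qpoly d (k + 1)).coeff j := by
  rw [Qpoly_eq, Qpoly_eq, spoly_pascal, show ((1 : ℤ) - 1) = 0 by norm_num, coeff_add]
  have := spoly_pos d k hk j
  linarith
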